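/- Let γ = (γ₁,…,γ_n) be a multi-index with all γ_i even and let μ be the normalized surface measure on S^{n−1} ⊆ ℝⁿ. Then ∫_{S^{n−1}} x^γ dμ = Γ(η₁)⋯Γ(η_n)·Γ(n/2) / (Γ(1/2)ⁿ · Γ(η₁+⋯+η_n)) where η_i = (γ_i+1)/2; and the integral is 0 if some γ_i is odd. -/

import Mathlib

open MeasureTheory

/-- The unit sphere S^{n-1} ⊆ ℝⁿ. -/
def sphereSet (n : ℕ) : Set (Fin n → ℝ) := {v | ∑ i, v i ^ 2 = 1}

namespace Folland

variable {n : ℕ}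

/-! ### Compactness of the sphere -/

lemma abs_le_one {v : Fin n → ℝ} (hv : v ∈ sphereSet n) (i : Fin n) : |v i| ≤ 1 := by
  have h1 : v i ^ 2 ≤ 1 := by
    rw [← hv]
    exact Finset.single_le_sum (f := fun j => v j ^ 2) (fun j _ => sq_nonneg _) (Finset.mem_univ i)
  nlinarith [abs_nonneg (v i), sq_abs (v i)]

lemma isCompact_sphereSet : IsCompact (sphereSet n) := by
  have hclosed : IsClosed (sphereSet n) := by
    have : Continuous fun v : Fin n → ℝ => ∑ i, v i ^ 2 :=
      continuous_finset_sum _ fun i _ => (continuous_apply i).pow 2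
    exact isClosed_eq this continuous_const
  have hbdd : Bornology.IsBounded (sphereSet n) := by
    apply Bornology.IsBounded.subset (Metric.isBounded_closedBall (x := (0 : Fin n → ℝ)) (r := 1))
    intro v hv
    simp only [Metric.mem_closedBall, dist_zero_right, pi_norm_le_iff_of_nonneg zero_le_one]
    intro i
    rw [Real.norm_eq_abs]
    exact abs_le_one hv i
  exact Metric.isCompact_of_isClosed_isBounded hclosed hbdd

instance : CompactSpace ↥(sphereSet n) := isCompact_iff_compactSpace.mp isCompact_sphereSet

/-! ### Linear isometries: sign flips and rotations -/

/-- Sign flip in coordinate `i`. -/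
noncomputable def negCoord (i : Fin n) : (Fin n → ℝ) ≃ₗ[ℝ] (Fin n → ℝ) :=
  LinearEquiv.ofInvolutive
    { toFun := fun v k => if k = i then -v k else v k
      map_add' := fun v w => by funext k; by_cases h : k = i <;> simp [h] <;> ring
      map_smul' := fun c v => by funext k; by_cases h : k = i <;> simp [h] <;> ring }
    (fun v => by funext k; by_cases h : k = i <;> simp [h])

lemma negCoord_apply (i k : Fin n) (v : Fin n → ℝ) :
    negCoord i v k = if k = i then -v k else v k := rfl

lemma negCoord_sq (i : Fin n) (v : Fin n → ℝ) :
    ∑ k, (negCoord i v) k ^ 2 = ∑ k, v k ^ 2 := by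
  apply Finset.sum_congr rfl
  intro k _
  rw [negCoord_apply]
  by_cases h : k = i <;> simp [h]

/-- Rotation in the `(i,j)`-plane. -/
noncomputable def rotCoord (i j : Fin n) (c s : ℝ) (hcs : c ^ 2 + s ^ 2 = 1) (hij : i ≠ j) :
    (Fin n → ℝ) ≃ₗ[ℝ] (Fin n → ℝ) :=
  LinearEquiv.ofLinear
    { toFun := fun v k => if k = i then c * v i - s * v j else if k = j then s * v i + c * v j else v k
      map_add' := fun v w => by
        funext k
        by_cases h : k = i
        · simp [h]; ring
        · by_cases h' : k = j <;> simp [h, h', hij.symm] <;> ring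
      map_smul' := fun r v => by
        funext k
        by_cases h : k = i
        · simp [h]; ring
        · by_cases h' : k = j <;> simp [h, h', hij.symm] <;> ring }
    { toFun := fun v k => if k = i then c * v i + s * v j else if k = j then - s * v i + c * v j else v k
      map_add' := fun v w => by
        funext k
        by_cases h : k = i
        · simp [h]; ring
        · by_cases h' : k = j <;> simp [h, h', hij.symm] <;> ring
      map_smul' := fun r v => by
        funext k
        by_cases h : k = i
        · simp [h]; ring
        · by_cases h' : k = j <;> simp [h, h', hij.symm] <;> ring }
    (by
      apply LinearMap.ext; intro v; funext k
      by_cases h : k = i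
      · simp [h, hij, hij.symm]
        linear_combination v i * hcs
      · by_cases h' : k = j
        · simp [h, h', hij, hij.symm]
          linear_combination v j * hcs
        · simp [h, h'])
    (by
      apply LinearMap.ext; intro v; funext k
      by_cases h : k = i
      · simp [h, hij, hij.symm]
        linear_combination v i * hcs
      · by_cases h' : k = j
        · simp [h, h', hij, hij.symm]
          linear_combination v j * hcs
        · simp [h, h'])

lemma rotCoord_apply (i j : Fin n) (c s : ℝ) (hcs) (hij : i ≠ j) (v : Fin n → ℝ) (k : Fin n) :
    rotCoord i j c s hcs hij v k =
      if k = i then c * v i - s * v j else if k = j then s * v i + c * v j else v k := rfl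

lemma rotCoord_sq (i j : Fin n) (c s : ℝ) (hcs) (hij : i ≠ j) (v : Fin n → ℝ) :
    ∑ k, (rotCoord i j c s hcs hij v) k ^ 2 = ∑ k, v k ^ 2 := by
  have key : ∀ k, (rotCoord i j c s hcs hij v) k ^ 2 - v k ^ 2 =
      if k = i then (c * v i - s * v j) ^ 2 - v i ^ 2
      else if k = j then (s * v i + c * v j) ^ 2 - v j ^ 2 else 0 := by
    intro k
    rw [rotCoord_apply]
    by_cases h : k = i
    · simp [h]
    · by_cases h' : k = j <;> simp [h, h', hij.symm]
  have hz : ∑ k, ((rotCoord i j c s hcs hij v) k ^ 2 - v k ^ 2) = 0 := by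
    rw [Finset.sum_congr rfl fun k _ => key k]
    set f : Fin n → ℝ := fun k =>
      if k = i then (c * v i - s * v j) ^ 2 - v i ^ 2
      else if k = j then (s * v i + c * v j) ^ 2 - v j ^ 2 else 0 with hf
    rw [← Finset.add_sum_erase Finset.univ f (Finset.mem_univ i),
       ← Finset.add_sum_erase _ f (Finset.mem_erase.2 ⟨hij.symm, Finset.mem_univ j⟩)]
    have h1 : f i = (c * v i - s * v j) ^ 2 - v i ^ 2 := by simp [hf]
    have h2 : f j = (s * v i + c * v j) ^ 2 - v j ^ 2 := by simp [hf, hij.symm]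
    have h3 : ∑ k ∈ (Finset.univ.erase i).erase j, f k = 0 := by
      apply Finset.sum_eq_zero
      intro k hk
      have hkj : k ≠ j := (Finset.mem_erase.1 hk).1
      have hki : k ≠ i := (Finset.mem_erase.1 (Finset.mem_erase.1 hk).2).1
      simp [hf, hki, hkj]
    rw [h1, h2, h3]
    linear_combination (v i ^ 2 + v j ^ 2) * hcs
  have hsplit := Finset.sum_sub_distrib (s := Finset.univ)
    (f := fun k => (rotCoord i j c s hcs hij v) k ^ 2) (g := fun k => v k ^ 2)
  rw [hsplit] at hz
  linarith

/-! ### Combinatorial helpers -/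

lemma sum_range_even_odd {M : Type*} [AddCommMonoid M] (F : ℕ → M) (D : ℕ) :
    ∑ p ∈ Finset.range (2*D+1), F p =
      ∑ k ∈ Finset.range (D+1), F (2*k) + ∑ k ∈ Finset.range D, F (2*k+1) := by
  induction D with
  | zero => simp
  | succ D ih =>
    have h2 : 2*(D+1)+1 = (2*D+1) + 1 + 1 := by ring
    rw [h2, Finset.sum_range_succ, Finset.sum_range_succ, ih,
      Finset.sum_range_succ (fun k => F (2*k)) (D+1),
      Finset.sum_range_succ (fun k => F (2*k+1)) D]
    have e2 : 2*D+1+1 = 2*(D+1) := by ring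
    rw [e2]
    abel

lemma poly_indep : ∀ (D : ℕ) (g : ℕ → ℝ),
    (∑ k ∈ Finset.range (D+1),
      Polynomial.C (g k) * (1 - Polynomial.X)^(D-k) * Polynomial.X^k) = 0 →
    ∀ k ≤ D, g k = 0 := by
  intro D
  induction D with
  | zero =>
    intro g h k hk
    interval_cases k
    simpa using h
  | succ D ih =>
    intro g h k hk
    have hg0 : g 0 = 0 := by
      have := congrArg (Polynomial.eval 0) h
      simp only [Polynomial.eval_finset_sum, Polynomial.eval_mul, Polynomial.eval_pow,
        Polynomial.eval_sub, Polynomial.eval_one, Polynomial.eval_X, Polynomial.eval_C,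
        Polynomial.eval_zero] at this
      rw [Finset.sum_eq_single 0] at this
      · simpa using this
      · intro b _ hb
        simp [zero_pow hb]
      · simp
    have hfac : (∑ k ∈ Finset.range (D+1),
        Polynomial.C (g (k+1)) * (1 - Polynomial.X)^(D-k) * Polynomial.X^k) * Polynomial.X = 0 := by
      rw [Finset.sum_mul]
      rw [← h, Finset.sum_range_succ' _ (D+1)]
      have : Polynomial.C (g 0) * (1 - Polynomial.X)^(D+1-0) * Polynomial.X^0 = 0 := by
        rw [hg0]; simp
      rw [this, add_zero]
      apply Finset.sum_congr rfl
      intro k hk'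
      have : D + 1 - (k+1) = D - k := by omega
      rw [this]
      ring
    have hX : (Polynomial.X : Polynomial ℝ) ≠ 0 := Polynomial.X_ne_zero
    have hq : (∑ k ∈ Finset.range (D+1),
        Polynomial.C (g (k+1)) * (1 - Polynomial.X)^(D-k) * Polynomial.X^k) = 0 := by
      rcases mul_eq_zero.1 hfac with h' | h'
      · exact h'
      · exact absurd h' hX
    rcases Nat.eq_zero_or_pos k with rfl | hkpos
    · exact hg0
    · obtain ⟨k', rfl⟩ : ∃ k', k = k' + 1 := ⟨k - 1, by omega⟩
      exact ih (fun m => g (m+1)) hq k' (by omega)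

lemma choose_identity (K A : ℕ) :
    ((2*K+1 : ℕ) : ℝ) * (Nat.choose (K+1+A) K) * (Nat.choose (2*K+2*A+2) (2*K+2)) =
    ((2*A+1 : ℕ) : ℝ) * (Nat.choose (K+1+A) (K+1)) * (Nat.choose (2*K+2*A+2) (2*K)) := by
  have h1 : K ≤ K+1+A := by omega
  have h2 : K+1 ≤ K+1+A := by omega
  have h3 : 2*K+2 ≤ 2*K+2*A+2 := by omega
  have h4 : 2*K ≤ 2*K+2*A+2 := by omega
  rw [Nat.cast_choose ℝ h1, Nat.cast_choose ℝ h2, Nat.cast_choose ℝ h3, Nat.cast_choose ℝ h4]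
  have e1 : K+1+A-K = A+1 := by omega
  have e2 : K+1+A-(K+1) = A := by omega
  have e3 : 2*K+2*A+2-(2*K+2) = 2*A := by omega
  have e4 : 2*K+2*A+2-2*K = 2*A+2 := by omega
  rw [e1, e2, e3, e4]
  have fK : (Nat.factorial (K+1) : ℝ) = (K+1) * Nat.factorial K := by
    rw [Nat.factorial_succ]; push_cast; ring
  have fA : (Nat.factorial (A+1) : ℝ) = (A+1) * Nat.factorial A := by
    rw [Nat.factorial_succ]; push_cast; ring
  have f2K : (Nat.factorial (2*K+2) : ℝ) = (2*K+2) * (2*K+1) * Nat.factorial (2*K) := by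
    have : 2*K+2 = (2*K+1)+1 := by ring
    rw [this, Nat.factorial_succ, Nat.factorial_succ]; push_cast; ring
  have f2A : (Nat.factorial (2*A+2) : ℝ) = (2*A+2) * (2*A+1) * Nat.factorial (2*A) := by
    have : 2*A+2 = (2*A+1)+1 := by ring
    rw [this, Nat.factorial_succ, Nat.factorial_succ]; push_cast; ring
  have nz : ∀ m : ℕ, (Nat.factorial m : ℝ) ≠ 0 := fun m => by
    exact_mod_cast Nat.factorial_ne_zero m
  rw [fK, fA, f2K, f2A]
  field_simp [fK, fA, f2K, f2A]
  push_cast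
  ring

lemma choose_identity' (K A : ℕ) :
    ((2*K+1 : ℕ) : ℝ) * (Nat.choose (K+A+1) K) * (Nat.choose (2*(K+A+1)) (2*(K+1))) =
    ((2*A+1 : ℕ) : ℝ) * (Nat.choose (K+A+1) (K+1)) * (Nat.choose (2*(K+A+1)) (2*K)) := by
  have h := choose_identity K A
  have e1 : K+1+A = K+A+1 := by omega
  have e2 : 2*K+2*A+2 = 2*(K+A+1) := by omega
  have e3 : 2*K+2 = 2*(K+1) := by omega
  rw [e1, e2, e3] at h
  exact h

/-- Exponent vector with `a` at `i`, `b` at `j`, `δ` elsewhere. -/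
def expo (i j : Fin n) (δ : Fin n → ℕ) (a b : ℕ) : Fin n → ℕ :=
  fun l => if l = i then a else if l = j then b else δ l

lemma prod_expo {i j : Fin n} (hij : i ≠ j) (δ : Fin n → ℕ) (a b : ℕ) (v : Fin n → ℝ) :
    ∏ l, v l ^ expo i j δ a b l =
      v i ^ a * v j ^ b * ∏ l ∈ (Finset.univ.erase i).erase j, v l ^ δ l := by
  rw [← Finset.mul_prod_erase Finset.univ _ (Finset.mem_univ i),
      ← Finset.mul_prod_erase _ _ (Finset.mem_erase.2 ⟨hij.symm, Finset.mem_univ j⟩)]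
  have h1 : expo i j δ a b i = a := by simp [expo]
  have h2 : expo i j δ a b j = b := by simp [expo, hij.symm]
  have h3 : ∀ l ∈ (Finset.univ.erase i).erase j, v l ^ expo i j δ a b l = v l ^ δ l := by
    intro l hl
    have hlj : l ≠ j := (Finset.mem_erase.1 hl).1
    have hli : l ≠ i := (Finset.mem_erase.1 (Finset.mem_erase.1 hl).2).1
    simp [expo, hli, hlj]
  rw [h1, h2, Finset.prod_congr rfl h3, mul_assoc]

/-! ### Moments -/

section M

variable (μ : Measure ↥(sphereSet n)) [IsProbabilityMeasure μ]

lemma integrable_of_cont {g : (Fin n → ℝ) → ℝ} (hg : Continuous g) :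
    Integrable (fun x : ↥(sphereSet n) => g x.1) μ :=
  (hg.comp continuous_subtype_val).integrable_of_hasCompactSupport
    (HasCompactSupport.of_compactSpace _)

/-- The moment of the monomial with exponent vector `γ`. -/
noncomputable def mom (γ : Fin n → ℕ) : ℝ := ∫ u, (∏ i, (u : Fin n → ℝ) i ^ γ i) ∂μ

lemma contMom (γ : Fin n → ℕ) : Continuous (fun v : Fin n → ℝ => ∏ i, v i ^ γ i) :=
  continuous_finset_prod _ fun i _ => (continuous_apply i).pow _

lemma integrable_mom (γ : Fin n → ℕ) :
    Integrable (fun x : ↥(sphereSet n) => ∏ i, x.1 i ^ γ i) μ :=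
  integrable_of_cont μ (contMom γ)

/-- The normalizing right-hand side of Folland's formula. -/
noncomputable def Rh (γ : Fin n → ℕ) : ℝ :=
  (∏ i, Real.Gamma (((γ i : ℝ) + 1) / 2)) * Real.Gamma ((n : ℝ) / 2) /
    (Real.Gamma (1 / 2) ^ n * Real.Gamma (∑ i, ((γ i : ℝ) + 1) / 2))

variable (hinv : ∀ (A : (Fin n → ℝ) ≃ₗ[ℝ] (Fin n → ℝ))
      (hA : ∀ v : Fin n → ℝ, ∑ i, (A v) i ^ 2 = ∑ i, v i ^ 2),
      MeasurePreserving
        (fun x : ↥(sphereSet n) =>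
          (⟨A x.1, by
            show ∑ i, (A x.1) i ^ 2 = 1
            rw [hA]; exact x.2⟩ : ↥(sphereSet n))) μ μ)

include hinv in
lemma integral_comp (A : (Fin n → ℝ) ≃ₗ[ℝ] (Fin n → ℝ))
    (hA : ∀ v : Fin n → ℝ, ∑ i, (A v) i ^ 2 = ∑ i, v i ^ 2)
    (g : (Fin n → ℝ) → ℝ) :
    ∫ x : ↥(sphereSet n), g (A x.1) ∂μ = ∫ x : ↥(sphereSet n), g x.1 ∂μ := by
  have hA' : ∀ v : Fin n → ℝ, ∑ i, (A.symm v) i ^ 2 = ∑ i, v i ^ 2 := by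
    intro v
    conv_rhs => rw [← A.apply_symm_apply v]
    rw [hA]
  have hmemA : ∀ x : ↥(sphereSet n), A x.1 ∈ sphereSet n := fun x => by
    show ∑ i, (A x.1) i ^ 2 = 1
    rw [hA]; exact x.2
  have hmemA' : ∀ x : ↥(sphereSet n), A.symm x.1 ∈ sphereSet n := fun x => by
    show ∑ i, (A.symm x.1) i ^ 2 = 1
    rw [hA']; exact x.2
  set T : ↥(sphereSet n) → ↥(sphereSet n) := fun x => ⟨A x.1, hmemA x⟩ with hT
  have hcont : Continuous (A : (Fin n → ℝ) →ₗ[ℝ] (Fin n → ℝ)) :=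
    LinearMap.continuous_of_finiteDimensional _
  have hcont' : Continuous (A.symm : (Fin n → ℝ) →ₗ[ℝ] (Fin n → ℝ)) :=
    LinearMap.continuous_of_finiteDimensional _
  let H : Homeomorph ↥(sphereSet n) ↥(sphereSet n) :=
    { toFun := T
      invFun := fun x => ⟨A.symm x.1, hmemA' x⟩
      left_inv := fun x => by simp [hT]
      right_inv := fun x => by simp [hT]
      continuous_toFun := (hcont.comp continuous_subtype_val).subtype_mk _
      continuous_invFun := (hcont'.comp continuous_subtype_val).subtype_mk _ }
  have hemb : MeasurableEmbedding T := by
    have := H.measurableEmbedding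
    exact this
  have := (hinv A hA).integral_comp hemb (fun x : ↥(sphereSet n) => g x.1)
  exact this

include hinv in
lemma mom_odd (γ : Fin n → ℕ) (l : Fin n) (hl : Odd (γ l)) : mom μ γ = 0 := by
  have h := integral_comp μ hinv (negCoord l) (negCoord_sq l)
    (fun v : Fin n → ℝ => ∏ i, v i ^ γ i)
  have hpt : ∀ v : Fin n → ℝ, (∏ i, (negCoord l v) i ^ γ i) = -∏ i, v i ^ γ i := by
    intro v
    rw [← Finset.mul_prod_erase Finset.univ _ (Finset.mem_univ l),
        ← Finset.mul_prod_erase Finset.univ (fun i => v i ^ γ i) (Finset.mem_univ l)]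
    have h1 : ∀ i ∈ Finset.univ.erase l, (negCoord l v) i ^ γ i = v i ^ γ i := by
      intro i hi
      rw [negCoord_apply, if_neg (Finset.mem_erase.1 hi).1]
    rw [Finset.prod_congr rfl h1, negCoord_apply, if_pos rfl, hl.neg_pow]
    ring
  rw [show (fun x : ↥(sphereSet n) => ∏ i, (negCoord l x.1) i ^ γ i)
      = fun x : ↥(sphereSet n) => -∏ i, x.1 i ^ γ i from funext fun x => hpt x.1] at h
  rw [integral_neg] at h
  have : mom μ γ = - mom μ γ := (h.symm : _)
  linarith

include hinv in
lemma mom_zero_of_exists_odd (γ : Fin n → ℕ) (h : ∃ l, Odd (γ l)) : mom μ γ = 0 := by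
  obtain ⟨l, hl⟩ := h
  exact mom_odd μ hinv γ l hl

lemma mom_sum (γ : Fin n → ℕ) :
    ∑ j, mom μ (Function.update γ j (γ j + 2)) = mom μ γ := by
  have hpt : ∀ (j : Fin n) (x : ↥(sphereSet n)),
      (∏ i, x.1 i ^ (Function.update γ j (γ j + 2)) i) = x.1 j ^ 2 * ∏ i, x.1 i ^ γ i := by
    intro j x
    rw [← Finset.mul_prod_erase Finset.univ _ (Finset.mem_univ j),
        ← Finset.mul_prod_erase Finset.univ (fun i => x.1 i ^ γ i) (Finset.mem_univ j)]
    have h1 : ∀ i ∈ Finset.univ.erase j,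
        x.1 i ^ (Function.update γ j (γ j + 2)) i = x.1 i ^ γ i := by
      intro i hi
      rw [Function.update_of_ne (Finset.mem_erase.1 hi).1]
    rw [Finset.prod_congr rfl h1, Function.update_self]
    rw [pow_add]
    ring
  unfold mom
  rw [← integral_finset_sum]
  · apply integral_congr_ae
    filter_upwards with x
    rw [Finset.sum_congr rfl fun j _ => hpt j x, ← Finset.sum_mul]
    rw [x.2]
    ring
  · intro j _
    exact integrable_mom μ _

include hinv in
lemma key (i j : Fin n) (hij : i ≠ j) (δ : Fin n → ℕ) (D k : ℕ) (hk : k ≤ D) :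
    (Nat.choose (2*D) (2*k) : ℝ) * mom μ (expo i j δ (2*k) (2*D-2*k)) =
      (Nat.choose D k : ℝ) * mom μ (expo i j δ (2*D) 0) := by
  set R : (Fin n → ℝ) → ℝ := fun v => ∏ l ∈ (Finset.univ.erase i).erase j, v l ^ δ l with hR
  have hRcont : Continuous R := continuous_finset_prod _ fun l _ => (continuous_apply l).pow _
  set f : ℕ → ℝ := fun k' => mom μ (expo i j δ (2*k') (2*D-2*k')) with hf
  -- Step 1: the rotation relation
  have step1 : ∀ t ∈ Set.Icc (0:ℝ) 1,
      ∑ k' ∈ Finset.range (D+1),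
        (Nat.choose (2*D) (2*k') : ℝ) * t^k' * (1-t)^(D-k') * f k' =
      mom μ (expo i j δ (2*D) 0) := by
    intro t ht
    set c : ℝ := Real.sqrt t with hc
    set s : ℝ := Real.sqrt (1-t) with hs
    have hc2 : c^2 = t := Real.sq_sqrt ht.1
    have hs2 : s^2 = 1 - t := Real.sq_sqrt (by linarith [ht.2])
    have hcs : c^2 + s^2 = 1 := by rw [hc2, hs2]; ring
    have hrot := integral_comp μ hinv (rotCoord i j c s hcs hij)
      (rotCoord_sq i j c s hcs hij) (fun v => ∏ l, v l ^ expo i j δ (2*D) 0 l)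
    have hpt : ∀ v : Fin n → ℝ,
        (∏ l, (rotCoord i j c s hcs hij v) l ^ expo i j δ (2*D) 0 l) =
        ∑ p ∈ Finset.range (2*D+1),
          ((Nat.choose (2*D) p : ℝ) * c^p * (-s)^(2*D-p)) *
            (v i ^ p * v j ^ (2*D-p) * R v) := by
      intro v
      rw [prod_expo hij]
      have hri : (rotCoord i j c s hcs hij v) i = c * v i - s * v j := by
        rw [rotCoord_apply]; simp
      have hrrest : ∀ l ∈ (Finset.univ.erase i).erase j,
          (rotCoord i j c s hcs hij v) l ^ δ l = v l ^ δ l := by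
        intro l hl
        have hlj : l ≠ j := (Finset.mem_erase.1 hl).1
        have hli : l ≠ i := (Finset.mem_erase.1 (Finset.mem_erase.1 hl).2).1
        rw [rotCoord_apply, if_neg hli, if_neg hlj]
      rw [hri, Finset.prod_congr rfl hrrest, pow_zero, mul_one]
      have hbin : (c * v i - s * v j)^(2*D) =
          ∑ p ∈ Finset.range (2*D+1),
            ((Nat.choose (2*D) p : ℝ) * c^p * (-s)^(2*D-p)) * (v i ^ p * v j ^ (2*D-p)) := by
        rw [sub_eq_add_neg, ← neg_mul, add_pow]
        apply Finset.sum_congr rfl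
        intro p _
        rw [mul_pow, mul_pow]
        ring
      rw [hbin, Finset.sum_mul]
      apply Finset.sum_congr rfl
      intro p _
      ring
    have hint : ∫ x : ↥(sphereSet n), (∏ l, (rotCoord i j c s hcs hij x.1) l ^ expo i j δ (2*D) 0 l) ∂μ
        = ∑ p ∈ Finset.range (2*D+1),
            ((Nat.choose (2*D) p : ℝ) * c^p * (-s)^(2*D-p)) * mom μ (expo i j δ p (2*D-p)) := by
      have : (fun x : ↥(sphereSet n) => ∏ l, (rotCoord i j c s hcs hij x.1) l ^ expo i j δ (2*D) 0 l)
          = fun x : ↥(sphereSet n) => ∑ p ∈ Finset.range (2*D+1),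
              ((Nat.choose (2*D) p : ℝ) * c^p * (-s)^(2*D-p)) *
                (x.1 i ^ p * x.1 j ^ (2*D-p) * R x.1) := funext fun x => hpt x.1
      rw [this, integral_finset_sum]
      · apply Finset.sum_congr rfl
        intro p _
        rw [integral_const_mul]
        congr 1
        unfold mom
        apply integral_congr_ae
        filter_upwards with x
        rw [prod_expo hij]
      · intro p _
        exact (integrable_of_cont μ (Continuous.mul (Continuous.mul
          ((continuous_apply i).pow p) ((continuous_apply j).pow (2*D-p))) hRcont)).const_mul _
    have heq : mom μ (expo i j δ (2*D) 0) =
        ∑ p ∈ Finset.range (2*D+1),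
          ((Nat.choose (2*D) p : ℝ) * c^p * (-s)^(2*D-p)) * mom μ (expo i j δ p (2*D-p)) := by
      rw [← hint]
      rw [hrot]
      rfl
    rw [heq, sum_range_even_odd (fun p =>
      ((Nat.choose (2*D) p : ℝ) * c^p * (-s)^(2*D-p)) * mom μ (expo i j δ p (2*D-p))) D]
    have hodd : ∑ k' ∈ Finset.range D,
        ((Nat.choose (2*D) (2*k'+1) : ℝ) * c^(2*k'+1) * (-s)^(2*D-(2*k'+1))) *
          mom μ (expo i j δ (2*k'+1) (2*D-(2*k'+1))) = 0 := by
      apply Finset.sum_eq_zero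
      intro k' _
      have : mom μ (expo i j δ (2*k'+1) (2*D-(2*k'+1))) = 0 := by
        apply mom_odd μ hinv _ i
        simp [expo]
      rw [this, mul_zero]
    rw [hodd, add_zero]
    apply Finset.sum_congr rfl
    intro k' hk'
    have hk'le : k' ≤ D := by
      have := Finset.mem_range.1 hk'
      omega
    have hce : c^(2*k') = t^k' := by rw [pow_mul, hc2]
    have hse : (-s)^(2*D-2*k') = (1-t)^(D-k') := by
      have h2 : 2*D-2*k' = 2*(D-k') := by omega
      rw [h2, pow_mul, neg_sq, hs2]
    rw [hce, hse, hf]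
  -- Step 2: the polynomial argument
  set fD : ℝ := mom μ (expo i j δ (2*D) 0) with hfD
  set g : ℕ → ℝ := fun k' => (Nat.choose (2*D) (2*k') : ℝ) * f k' - (Nat.choose D k' : ℝ) * fD
    with hg
  set P : Polynomial ℝ := ∑ k' ∈ Finset.range (D+1),
      Polynomial.C (g k') * (1 - Polynomial.X)^(D-k') * Polynomial.X^k' with hP
  have hPeval : ∀ t ∈ Set.Icc (0:ℝ) 1, P.eval t = 0 := by
    intro t ht
    rw [hP]
    simp only [Polynomial.eval_finset_sum, Polynomial.eval_mul, Polynomial.eval_pow,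
      Polynomial.eval_sub, Polynomial.eval_one, Polynomial.eval_X, Polynomial.eval_C]
    have hbin1 : ∑ k' ∈ Finset.range (D+1),
        (Nat.choose D k' : ℝ) * t^k' * (1-t)^(D-k') = 1 := by
      have h := add_pow t (1-t) D
      simp only [add_sub_cancel, one_pow] at h
      have h2 : ∑ k' ∈ Finset.range (D+1), (Nat.choose D k' : ℝ) * t^k' * (1-t)^(D-k')
          = ∑ m ∈ Finset.range (D+1), t^m * (1-t)^(D-m) * (Nat.choose D m : ℝ) :=
        Finset.sum_congr rfl (by intro m _; ring)
      rw [h2]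
      exact h.symm
    have h1 := step1 t ht
    calc ∑ k' ∈ Finset.range (D+1), g k' * (1-t)^(D-k') * t^k'
        = (∑ k' ∈ Finset.range (D+1),
            (Nat.choose (2*D) (2*k') : ℝ) * t^k' * (1-t)^(D-k') * f k') -
          (∑ k' ∈ Finset.range (D+1),
            (Nat.choose D k' : ℝ) * t^k' * (1-t)^(D-k')) * fD := by
          rw [Finset.sum_mul, ← Finset.sum_sub_distrib]
          apply Finset.sum_congr rfl
          intro k' _
          rw [hg]
          ring
      _ = 0 := by rw [h1, hbin1]; ring
  have hPzero : P = 0 := by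
    apply Polynomial.eq_zero_of_infinite_isRoot
    have hicc : (Set.Icc (0:ℝ) 1).Infinite := Set.Icc_infinite (by norm_num)
    exact hicc.mono (fun t ht => hPeval t ht)
  have h0 : (Nat.choose (2*D) (2*k) : ℝ) * f k - (Nat.choose D k : ℝ) * fD = 0 :=
    poly_indep D g (by rw [← hP]; exact hPzero) k hk
  have : (Nat.choose (2*D) (2*k) : ℝ) * f k = (Nat.choose D k : ℝ) * fD := by linarith
  exact this

include hinv in
lemma mom_pairwise (γ : Fin n → ℕ) (hγ : ∀ l, Even (γ l)) (i j : Fin n) (hij : i ≠ j) :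
    ((γ i : ℝ) + 1) * mom μ (Function.update γ j (γ j + 2)) =
    ((γ j : ℝ) + 1) * mom μ (Function.update γ i (γ i + 2)) := by
  obtain ⟨K, hK⟩ := hγ i
  obtain ⟨A, hA⟩ := hγ j
  have h1 := key μ hinv i j hij γ (K+A+1) K (by omega)
  have h2 := key μ hinv i j hij γ (K+A+1) (K+1) (by omega)
  have expi : ∀ a b, expo i j γ a b i = a := fun a b => by simp [expo]
  have expj : ∀ a b, expo i j γ a b j = b := fun a b => by simp [expo, hij.symm]
  have expl : ∀ a b l, l ≠ i → l ≠ j → expo i j γ a b l = γ l := fun a b l h h' => by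
    simp [expo, h, h']
  have e1 : expo i j γ (2*K) (2*(K+A+1)-2*K) = Function.update γ j (γ j + 2) := by
    funext l
    by_cases hl : l = j
    · subst hl
      rw [Function.update_self, expj]
      omega
    · rw [Function.update_of_ne hl]
      by_cases hl' : l = i
      · subst hl'
        rw [expi]
        omega
      · rw [expl _ _ _ hl' hl]
  have e2 : expo i j γ (2*(K+1)) (2*(K+A+1)-2*(K+1)) = Function.update γ i (γ i + 2) := by
    funext l
    by_cases hl : l = i
    · subst hl
      rw [Function.update_self, expi]
      omega
    · rw [Function.update_of_ne hl]
      by_cases hl' : l = j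
      · subst hl'
        rw [expj]
        omega
      · rw [expl _ _ _ hl hl']
  rw [e1] at h1
  rw [e2] at h2
  have hcc := choose_identity' K A
  have hc1 : (0:ℝ) < (Nat.choose (2*(K+A+1)) (2*K) : ℝ) := by
    exact_mod_cast Nat.choose_pos (by omega)
  have hc2 : (0:ℝ) < (Nat.choose (2*(K+A+1)) (2*(K+1)) : ℝ) := by
    exact_mod_cast Nat.choose_pos (by omega)
  have hγi : (γ i : ℝ) = 2*K := by rw [hK]; push_cast; ring
  have hγj : (γ j : ℝ) = 2*A := by rw [hA]; push_cast; ring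
  have hmain : ((Nat.choose (2*(K+A+1)) (2*K) : ℝ) * (Nat.choose (2*(K+A+1)) (2*(K+1)) : ℝ)) *
      (((γ i : ℝ) + 1) * mom μ (Function.update γ j (γ j + 2))) =
      ((Nat.choose (2*(K+A+1)) (2*K) : ℝ) * (Nat.choose (2*(K+A+1)) (2*(K+1)) : ℝ)) *
      (((γ j : ℝ) + 1) * mom μ (Function.update γ i (γ i + 2))) := by
    rw [hγi, hγj]
    push_cast at hcc h1 h2 ⊢
    linear_combination (2*(K:ℝ)+1) * ((Nat.choose (2*(K+A+1)) (2*(K+1)) : ℕ) : ℝ) * h1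
      - (2*(A:ℝ)+1) * ((Nat.choose (2*(K+A+1)) (2*K) : ℕ) : ℝ) * h2
      + mom μ (expo i j γ (2*(K+A+1)) 0) * hcc
  exact mul_left_cancel₀ (ne_of_gt (mul_pos hc1 hc2)) hmain

include hinv in
lemma mom_rec (γ : Fin n → ℕ) (hγ : ∀ l, Even (γ l)) (i : Fin n) :
    ((n:ℝ) + ∑ l, (γ l : ℝ)) * mom μ (Function.update γ i (γ i + 2)) =
      ((γ i : ℝ) + 1) * mom μ γ := by
  have hs := mom_sum μ γ
  have h1 : ((γ i : ℝ) + 1) * mom μ γ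
      = ∑ j, ((γ i : ℝ) + 1) * mom μ (Function.update γ j (γ j + 2)) := by
    rw [← Finset.mul_sum, hs]
  have h2 : ∀ j, ((γ i : ℝ) + 1) * mom μ (Function.update γ j (γ j + 2))
      = ((γ j : ℝ) + 1) * mom μ (Function.update γ i (γ i + 2)) := by
    intro j
    by_cases hj : j = i
    · subst hj; rfl
    · exact mom_pairwise μ hinv γ hγ i j (fun h => hj h.symm)
  rw [h1, Finset.sum_congr rfl fun j _ => h2 j, ← Finset.sum_mul]
  congr 1
  rw [Finset.sum_add_distrib, Finset.sum_const, Finset.card_univ, Fintype.card_fin]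
  push_cast
  ring

lemma mom_base (γ : Fin n → ℕ) (h : ∀ l, γ l = 0) : mom μ γ = 1 := by
  unfold mom
  have : (fun u : ↥(sphereSet n) => ∏ i, (u : Fin n → ℝ) i ^ γ i)
      = fun _ => (1:ℝ) := by
    funext u
    apply Finset.prod_eq_one
    intro i _
    rw [h i, pow_zero]
  rw [this, integral_const]
  simp

lemma Rh_base (hn : 0 < n) (γ : Fin n → ℕ) (h : ∀ l, γ l = 0) : Rh (n := n) γ = 1 := by
  unfold Rh
  have harg : ∀ i : Fin n, ((γ i : ℝ) + 1) / 2 = 1/2 := fun i => by rw [h i]; norm_num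
  have h1 : (∏ i, Real.Gamma (((γ i : ℝ) + 1) / 2)) = Real.Gamma (1/2) ^ n := by
    calc ∏ i, Real.Gamma (((γ i : ℝ) + 1) / 2)
        = ∏ _i : Fin n, Real.Gamma (1/2 : ℝ) :=
          Finset.prod_congr rfl fun i _ => by rw [harg i]
      _ = Real.Gamma (1/2) ^ n := by
          rw [Finset.prod_const, Finset.card_univ, Fintype.card_fin]
  have h2 : (∑ i, ((γ i : ℝ) + 1) / 2) = (n : ℝ) / 2 := by
    calc ∑ i, ((γ i : ℝ) + 1) / 2
        = ∑ _i : Fin n, (1/2 : ℝ) := Finset.sum_congr rfl fun i _ => by rw [harg i]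
      _ = (n : ℝ) / 2 := by
          rw [Finset.sum_const, Finset.card_univ, Fintype.card_fin, nsmul_eq_mul]
          ring
  rw [h1, h2]
  apply div_self
  have g1 : 0 < Real.Gamma (1/2) := Real.Gamma_pos_of_pos (by norm_num)
  have g2 : 0 < Real.Gamma ((n:ℝ)/2) := Real.Gamma_pos_of_pos (by positivity)
  positivity

include hinv in
lemma mom_even (hn : 0 < n) :
    ∀ N (γ : Fin n → ℕ), ∑ l, γ l = N → (∀ l, Even (γ l)) → mom μ γ = Rh γ := by
  intro N
  induction N using Nat.strong_induction_on with
  | _ N ih =>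
    intro γ hsum hev
    by_cases h0 : ∀ l, γ l = 0
    · rw [mom_base μ γ h0, Rh_base hn γ h0]
    · push_neg at h0
      obtain ⟨i, hi⟩ := h0
      have hge2 : 2 ≤ γ i := by
        obtain ⟨m, hm⟩ := hev i
        omega
      set γ' : Fin n → ℕ := Function.update γ i (γ i - 2) with hγ'
      have hγ'i : γ' i = γ i - 2 := Function.update_self i _ γ
      have hγ'l : ∀ l, l ≠ i → γ' l = γ l := fun l hl => Function.update_of_ne hl _ γ
      have hupd : Function.update γ' i (γ' i + 2) = γ := by
        funext l
        by_cases hl : l = i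
        · subst hl
          rw [Function.update_self, hγ'i]
          omega
        · rw [Function.update_of_ne hl, hγ'l l hl]
      have hev' : ∀ l, Even (γ' l) := by
        intro l
        by_cases hl : l = i
        · subst hl
          rw [hγ'i]
          obtain ⟨m, hm⟩ := hev l
          exact ⟨m - 1, by omega⟩
        · rw [hγ'l l hl]; exact hev l
      have hsum' : ∑ l, γ' l + 2 = N := by
        have hA : ∑ l, γ' l = γ' i + ∑ l ∈ Finset.univ.erase i, γ' l :=
          (Finset.add_sum_erase _ _ (Finset.mem_univ i)).symm
        have hB : ∑ l, γ l = γ i + ∑ l ∈ Finset.univ.erase i, γ l :=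
          (Finset.add_sum_erase _ _ (Finset.mem_univ i)).symm
        have hC : ∑ l ∈ Finset.univ.erase i, γ' l = ∑ l ∈ Finset.univ.erase i, γ l :=
          Finset.sum_congr rfl fun l hl => hγ'l l (Finset.mem_erase.1 hl).1
        omega
      have hIH : mom μ γ' = Rh γ' := ih (∑ l, γ' l) (by omega) γ' rfl hev'
      have hrec := mom_rec μ hinv γ' hev' i
      rw [hupd] at hrec
      have hpos : (0:ℝ) < (n:ℝ) + ∑ l, (γ' l : ℝ) := by
        have : (0:ℝ) < (n:ℝ) := by exact_mod_cast hn
        have hnn : (0:ℝ) ≤ ∑ l, (γ' l : ℝ) :=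
          Finset.sum_nonneg fun l _ => by positivity
        linarith
      have hrh : ((n:ℝ) + ∑ l, (γ' l : ℝ)) * Rh γ = ((γ' i : ℝ) + 1) * Rh γ' := by
        unfold Rh
        have hcast : (γ i : ℝ) = (γ' i : ℝ) + 2 := by
          rw [hγ'i]
          push_cast [hge2]
          ring
        have hprodsplit : (∏ l, Real.Gamma (((γ l : ℝ) + 1) / 2))
            = (((γ' i : ℝ) + 1) / 2) * ∏ l, Real.Gamma (((γ' l : ℝ) + 1) / 2) := by
          rw [← Finset.mul_prod_erase Finset.univ _ (Finset.mem_univ i),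
              ← Finset.mul_prod_erase Finset.univ
                (fun l => Real.Gamma (((γ' l : ℝ) + 1) / 2)) (Finset.mem_univ i)]
          have hrest : ∀ l ∈ Finset.univ.erase i,
              Real.Gamma (((γ l : ℝ) + 1) / 2) = Real.Gamma (((γ' l : ℝ) + 1) / 2) := by
            intro l hl
            rw [hγ'l l (Finset.mem_erase.1 hl).1]
          rw [Finset.prod_congr rfl hrest]
          have harg : ((γ i : ℝ) + 1) / 2 = ((γ' i : ℝ) + 1) / 2 + 1 := by
            rw [hcast]; ring
          rw [harg, Real.Gamma_add_one (by positivity)]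
          ring
        have hsumsplit : (∑ l, ((γ l : ℝ) + 1) / 2) = (∑ l, ((γ' l : ℝ) + 1) / 2) + 1 := by
          rw [← Finset.add_sum_erase Finset.univ _ (Finset.mem_univ i),
              ← Finset.add_sum_erase Finset.univ
                (fun l => ((γ' l : ℝ) + 1) / 2) (Finset.mem_univ i)]
          have hrest : ∀ l ∈ Finset.univ.erase i,
              ((γ l : ℝ) + 1) / 2 = ((γ' l : ℝ) + 1) / 2 := by
            intro l hl
            rw [hγ'l l (Finset.mem_erase.1 hl).1]
          rw [Finset.sum_congr rfl hrest, hcast]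
          ring
        have hS'val : (∑ l, ((γ' l : ℝ) + 1) / 2) = ((∑ l, (γ' l : ℝ)) + n) / 2 := by
          rw [← Finset.sum_div, Finset.sum_add_distrib, Finset.sum_const, Finset.card_univ,
            Fintype.card_fin, nsmul_eq_mul, mul_one]
        have hS'pos : (0:ℝ) < ∑ l, ((γ' l : ℝ) + 1) / 2 := by
          rw [hS'val]; linarith
        rw [hprodsplit, hsumsplit, Real.Gamma_add_one (ne_of_gt hS'pos)]
        have hGpos : 0 < Real.Gamma (∑ l, ((γ' l : ℝ) + 1) / 2) :=
          Real.Gamma_pos_of_pos hS'pos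
        have hghalf : 0 < Real.Gamma (1/2 : ℝ) := Real.Gamma_pos_of_pos (by norm_num)
        rw [hS'val]
        field_simp
        ring
      have hfin : ((n:ℝ) + ∑ l, (γ' l : ℝ)) * mom μ γ
          = ((n:ℝ) + ∑ l, (γ' l : ℝ)) * Rh γ := by
        rw [hrec, hrh, hIH]
      exact mul_left_cancel₀ (ne_of_gt hpos) hfin

end M

end Folland

theorem stmt_16 {n : ℕ} (hn : 0 < n)
    (μ : Measure ↥(sphereSet n)) [IsProbabilityMeasure μ]
    -- μ is the normalized surface measure: a probability measure invariant under
    -- every linear isometry of ℝⁿ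
    (hinv : ∀ (A : (Fin n → ℝ) ≃ₗ[ℝ] (Fin n → ℝ))
      (hA : ∀ v : Fin n → ℝ, ∑ i, (A v) i ^ 2 = ∑ i, v i ^ 2),
      MeasurePreserving
        (fun x : ↥(sphereSet n) =>
          (⟨A x.1, by
            show ∑ i, (A x.1) i ^ 2 = 1
            rw [hA]; exact x.2⟩ : ↥(sphereSet n))) μ μ)
    (γ : Fin n → ℕ) :
    -- Folland's formula
    ((∀ i, Even (γ i)) →
      ∫ u, (∏ i, (u : Fin n → ℝ) i ^ γ i) ∂μ =
        (∏ i, Real.Gamma (((γ i : ℝ) + 1) / 2)) * Real.Gamma ((n : ℝ) / 2) /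
          (Real.Gamma (1 / 2) ^ n * Real.Gamma (∑ i, ((γ i : ℝ) + 1) / 2))) ∧
    ((∃ i, Odd (γ i)) → ∫ u, (∏ i, (u : Fin n → ℝ) i ^ γ i) ∂μ = 0) := by
  constructor
  · intro hev
    exact Folland.mom_even μ hinv hn (∑ l, γ l) γ rfl hev
  · intro hodd
    exact Folland.mom_zero_of_exists_odd μ hinv γ hodd
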